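/- Let n ≥ 1, let a ∈ ℝ^n with a ≠ 0, and let c ∈ ℝ. Define Y_c = {(x, z, t) ∈ ℝ^n × ℝ × ℝ : z ∈ {0,1} and t ≥ (c − aᵀx)²(1 − z)}. Then the closure of the convex hull of Y_c equals ℝ^n × [0,1] × [0, ∞). In other words, any closed convex relaxation of Y_c is trivial. -/

import Mathlib

open Matrix Set

/-- Any closed convex relaxation of the mixed-integer epigraph
`Y_c = {(x,z,t) : z ∈ {0,1}, t ≥ (c - aᵀx)²(1-z)}` is trivial:
`cl conv (Y_c) = ℝⁿ × [0,1] × ℝ₊`. -/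
theorem trivial_closure_convexHull
    (n : ℕ) (hn : 1 ≤ n) (a : Fin n → ℝ) (ha : a ≠ 0) (c : ℝ) :
    closure (convexHull ℝ
      {p : (Fin n → ℝ) × ℝ × ℝ |
        (p.2.1 = 0 ∨ p.2.1 = 1) ∧ (c - a ⬝ᵥ p.1) ^ 2 * (1 - p.2.1) ≤ p.2.2}) =
    {p : (Fin n → ℝ) × ℝ × ℝ | p.2.1 ∈ Set.Icc (0 : ℝ) 1 ∧ 0 ≤ p.2.2} := by
  set Y : Set ((Fin n → ℝ) × ℝ × ℝ) :=
    {p : (Fin n → ℝ) × ℝ × ℝ |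
      (p.2.1 = 0 ∨ p.2.1 = 1) ∧ (c - a ⬝ᵥ p.1) ^ 2 * (1 - p.2.1) ≤ p.2.2} with hYdef
  have hSeq : {p : (Fin n → ℝ) × ℝ × ℝ | p.2.1 ∈ Set.Icc (0 : ℝ) 1 ∧ 0 ≤ p.2.2}
      = (univ : Set (Fin n → ℝ)) ×ˢ (Icc (0:ℝ) 1 ×ˢ Ici (0:ℝ)) := by
    ext ⟨x, z, t⟩; simp [Set.mem_prod]
  -- a key witness index
  obtain ⟨i, hi⟩ : ∃ i, a i ≠ 0 := by
    by_contra h; push_neg at h; exact ha (funext h)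
  set x₀ : Fin n → ℝ := (c / a i) • (Pi.single i (1:ℝ) : Fin n → ℝ) with hx₀
  have ha0 : a ⬝ᵥ x₀ = c := by
    rw [hx₀, dotProduct_smul, dotProduct_single, mul_one, smul_eq_mul]
    field_simp
  -- key: for z ∈ (0,1], t ≥ 0, (x,z,t) ∈ conv Y
  have key : ∀ (x : Fin n → ℝ) (z t : ℝ), 0 ≤ t → 0 < z → z ≤ 1 →
      (x, z, t) ∈ convexHull ℝ Y := by
    intro x z t ht hz hz1
    set x₁ : Fin n → ℝ := z⁻¹ • (x - (1 - z) • x₀) with hx₁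
    have hY0 : (x₀, (0:ℝ), t) ∈ Y := by
      constructor
      · exact Or.inl rfl
      · simp only [ha0]
        simp [ht]
    have hY1 : (x₁, (1:ℝ), t) ∈ Y := by
      constructor
      · exact Or.inr rfl
      · simp [ht]
    have hc := (convex_convexHull ℝ Y) (subset_convexHull ℝ Y hY0)
      (subset_convexHull ℝ Y hY1) (by linarith : (0:ℝ) ≤ 1 - z) hz.le (by ring)
    have heq : (1 - z) • ((x₀, (0:ℝ), t) : (Fin n → ℝ) × ℝ × ℝ)
        + z • (x₁, (1:ℝ), t) = (x, z, t) := by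
      have h1 : (1 - z) • x₀ + z • x₁ = x := by
        rw [hx₁, smul_inv_smul₀ hz.ne']
        abel
      refine Prod.ext ?_ (Prod.ext ?_ ?_)
      · simpa using h1
      · simp
      · show (1 - z) * t + z * t = t
        ring
    rwa [heq] at hc
  apply Subset.antisymm
  · apply closure_minimal
    · apply convexHull_min
      · rintro ⟨x, z, t⟩ ⟨hz | hz, ht⟩ <;> subst hz <;>
          constructor <;> simp_all <;> nlinarith [sq_nonneg (c - a ⬝ᵥ x)]
      · rw [hSeq]
        exact convex_univ.prod ((convex_Icc 0 1).prod (convex_Ici 0))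
    · rw [hSeq]
      exact isClosed_univ.prod ((isClosed_Icc).prod (isClosed_Ici))
  · rintro ⟨x, z, t⟩ ⟨⟨hz0, hz1⟩, ht⟩
    rcases eq_or_lt_of_le hz0 with hz | hz
    · -- z = 0 : approximate
      have hz' : z = 0 := hz.symm
      subst hz'
      have htend : Filter.Tendsto (fun k : ℕ => ((x, (1:ℝ)/(k+1), t) : (Fin n → ℝ) × ℝ × ℝ))
          Filter.atTop (nhds ((x, 0, t) : (Fin n → ℝ) × ℝ × ℝ)) := by
        refine Filter.Tendsto.prodMk_nhds tendsto_const_nhds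
          (Filter.Tendsto.prodMk_nhds ?_ tendsto_const_nhds)
        exact tendsto_one_div_add_atTop_nhds_zero_nat
      refine mem_closure_of_tendsto htend (Filter.Eventually.of_forall fun k => ?_)
      refine key x _ t ht (by positivity) ?_
      rw [div_le_one (by positivity)]
      linarith [Nat.cast_nonneg (α := ℝ) k]
    · exact subset_closure (key x z t ht hz hz1)
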